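/- Let G = (ℤ(1/2)/ℤ)^d be the d-fold product of the Prüfer 2-group of dyadic rationals mod 1. Let F_N = {k/2^N mod 1 : 0 ≤ k < 2^N}, Φ_N = F_N^d, and A = ⋃_{n≥0} (Φ_{2n+1} \ Φ_{2n}). Then if B + B ⊆ A for some B ⊆ G, the set B is finite. -/

import Mathlib

open Filter Pointwise
open scoped Classical

/-- The group `ℚ/ℤ`. -/
abbrev QmodZ := ℚ ⧸ AddSubgroup.zmultiples (1 : ℚ)

/-- The Prüfer 2-group `ℤ(1/2)/ℤ`, realized as the 2-primary component of `ℚ/ℤ`. -/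
noncomputable abbrev DyadicPrufer : AddSubgroup QmodZ :=
  AddCommGroup.primaryComponent QmodZ 2

/-- `Φ_N = F_N^d`, where `F_N = {k/2^N mod 1 : 0 ≤ k < 2^N}` is the set of elements
killed by `2^N`. -/
def PhiDyadic (d N : ℕ) : Set (Fin d → DyadicPrufer) := {y | (2 ^ N : ℕ) • y = 0}

/-- `A = ⋃_{n ≥ 0} (Φ_{2n+1} \ Φ_{2n})`. -/
def ADyadic (d : ℕ) : Set (Fin d → DyadicPrufer) :=
  ⋃ n : ℕ, PhiDyadic d (2 * n + 1) \ PhiDyadic d (2 * n)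

namespace Stmt18Aux

lemma finite_torsion (N : ℕ) : {x : QmodZ | (2 ^ N : ℕ) • x = 0}.Finite := by
  set x₀ : QmodZ := QuotientAddGroup.mk ((2 ^ N : ℚ)⁻¹) with hx₀
  have hx₀0 : (2 ^ N : ℤ) • x₀ = 0 := by
    rw [hx₀, ← QuotientAddGroup.mk_zsmul, QuotientAddGroup.eq_zero_iff]
    refine ⟨1, ?_⟩
    push_cast
    field_simp
    simp [zsmul_eq_mul]
  have key : {x : QmodZ | (2 ^ N : ℕ) • x = 0} ⊆ (fun k : ℕ => k • x₀) '' (Set.Iio (2 ^ N)) := by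
    rintro x hx
    obtain ⟨q, rfl⟩ := QuotientAddGroup.mk_surjective x
    simp only [Set.mem_setOf_eq, ← QuotientAddGroup.mk_nsmul,
      QuotientAddGroup.eq_zero_iff, AddSubgroup.mem_zmultiples_iff] at hx
    obtain ⟨m, hm⟩ := hx
    have hq : q = (m : ℚ) / 2 ^ N := by
      simp only [zsmul_eq_mul, nsmul_eq_mul] at hm
      push_cast at hm
      field_simp
      linarith [hm]
    have h1 : QuotientAddGroup.mk q = m • x₀ := by
      rw [hq, hx₀, ← QuotientAddGroup.mk_zsmul]
      congr 1
    have h2 : m • x₀ = (m % (2 ^ N : ℤ)) • x₀ := by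
      conv_lhs => rw [← Int.emod_add_mul_ediv m (2 ^ N), add_zsmul, mul_comm, mul_zsmul, hx₀0,
        smul_zero, add_zero]
    refine ⟨(m % (2 ^ N : ℤ)).toNat, ?_, ?_⟩
    · have := Int.emod_lt_of_pos m (b := 2 ^ N) (by positivity)
      have := Int.emod_nonneg m (b := 2 ^ N) (by positivity)
      simp only [Set.mem_Iio]
      zify
      push_cast at *
      omega
    · show ((m % (2 ^ N : ℤ)).toNat : ℕ) • x₀ = _
      rw [h1, h2, ← natCast_zsmul]
      congr 1
      have := Int.emod_nonneg m (b := 2 ^ N) (by positivity)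
      omega
  exact ((Set.finite_Iio (2 ^ N)).image _).subset key

variable {d : ℕ}

lemma exists_pow_smul (y : Fin d → DyadicPrufer) : ∃ N, (2 ^ N : ℕ) • y = 0 := by
  choose n hn using fun j => (y j).2
  refine ⟨Finset.univ.sup n, ?_⟩
  funext j
  have h1 : addOrderOf ((y j : QmodZ)) ∣ 2 ^ Finset.univ.sup n := by
    refine (addOrderOf_dvd_of_nsmul_eq_zero (hn j)).trans ?_
    exact pow_dvd_pow 2 (Finset.le_sup (Finset.mem_univ j))
  have h2 : (2 ^ Finset.univ.sup n : ℕ) • (y j : QmodZ) = 0 :=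
    addOrderOf_dvd_iff_nsmul_eq_zero.mp h1
  simp only [Pi.smul_apply, Pi.zero_apply]
  exact Subtype.ext (by simpa using h2)

noncomputable def w (y : Fin d → DyadicPrufer) : ℕ := Nat.find (exists_pow_smul y)

lemma w_le_iff {y : Fin d → DyadicPrufer} {N : ℕ} : w y ≤ N ↔ (2 ^ N : ℕ) • y = 0 := by
  constructor
  · intro h
    have hs : (2 ^ w y : ℕ) • y = 0 := Nat.find_spec (exists_pow_smul y)
    have : (2 : ℕ) ^ N = 2 ^ (N - w y) * 2 ^ w y := by
      rw [← pow_add]; congr 1; omega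
    rw [this, mul_smul, hs, smul_zero]
  · intro h
    exact Nat.find_min' _ h

lemma w_add_of_lt {y y' : Fin d → DyadicPrufer} (h : w y' < w y) : w (y + y') = w y := by
  have h1 : w (y + y') ≤ w y := by
    rw [w_le_iff, smul_add, w_le_iff.mp le_rfl, w_le_iff.mp h.le, add_zero]
  rcases Nat.lt_or_ge (w (y + y')) (w y) with h2 | h2
  · exfalso
    have hy1 : w y - 1 < w y := by omega
    have h3 : (2 ^ (w y - 1) : ℕ) • (y + y') = 0 := w_le_iff.mp (by omega)
    have h4 : (2 ^ (w y - 1) : ℕ) • y' = 0 := w_le_iff.mp (by omega)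
    have h5 : (2 ^ (w y - 1) : ℕ) • y = 0 := by
      have := h3
      rwa [smul_add, h4, add_zero] at this
    have := w_le_iff.mpr h5
    omega
  · omega

lemma w_double {y : Fin d → DyadicPrufer} {N : ℕ} : w (y + y) ≤ N ↔ w y ≤ N + 1 := by
  rw [w_le_iff, w_le_iff]
  constructor <;> intro h
  · rw [pow_succ, mul_comm, mul_smul, two_smul, ← smul_add, h]
  · rw [smul_add, ← two_smul ℕ, ← mul_smul, ← pow_succ', h]

lemma mem_A_iff (y : Fin d → DyadicPrufer) : y ∈ ADyadic d ↔ Odd (w y) := by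
  simp only [ADyadic, Set.mem_iUnion, Set.mem_diff, PhiDyadic, Set.mem_setOf_eq,
    ← w_le_iff]
  constructor
  · rintro ⟨n, h1, h2⟩; exact ⟨n, by omega⟩
  · rintro ⟨n, hn⟩; exact ⟨n, by omega, by omega⟩

end Stmt18Aux

open Stmt18Aux in
theorem stmt18 (d : ℕ) (B : Set (Fin d → DyadicPrufer)) (hB : B + B ⊆ ADyadic d) :
    B.Finite := by
  rcases B.eq_empty_or_nonempty with rfl | ⟨b₀, hb₀⟩
  · exact Set.finite_empty
  have heven : ∀ b ∈ B, Even (w b) := by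
    intro b hb
    have hA : b + b ∈ ADyadic d := hB (Set.add_mem_add hb hb)
    obtain ⟨m, hm⟩ := (mem_A_iff _).mp hA
    have h1 : w b ≤ w (b + b) + 1 := w_double.mp le_rfl
    have h2 : ¬ w b ≤ w (b + b) - 1 + 1 := by
      intro h
      have := w_double (y := b) (N := w (b + b) - 1) |>.mpr (by omega)
      omega
    have : w b = w (b + b) + 1 := by omega
    exact ⟨m + 1, by omega⟩
  have hconst : ∀ b ∈ B, w b = w b₀ := by
    intro b hb
    by_contra hne
    rcases Nat.lt_or_ge (w b) (w b₀) with h | h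
    · have hA : b₀ + b ∈ ADyadic d := hB (Set.add_mem_add hb₀ hb)
      obtain ⟨m, hm⟩ := (mem_A_iff _).mp hA
      rw [w_add_of_lt h] at hm
      obtain ⟨k, hk⟩ := heven b₀ hb₀
      omega
    · have h' : w b₀ < w b := lt_of_le_of_ne h (fun e => hne e.symm)
      have hA : b + b₀ ∈ ADyadic d := hB (Set.add_mem_add hb hb₀)
      obtain ⟨m, hm⟩ := (mem_A_iff _).mp hA
      rw [w_add_of_lt h'] at hm
      obtain ⟨k, hk⟩ := heven b hb
      omega
  -- B is contained in a finite torsion set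
  have hfin1 : {x : DyadicPrufer | (2 ^ w b₀ : ℕ) • x = 0}.Finite := by
    have : {x : DyadicPrufer | (2 ^ w b₀ : ℕ) • x = 0}
        = Subtype.val ⁻¹' {x : QmodZ | (2 ^ w b₀ : ℕ) • x = 0} := by
      ext x
      simp only [Set.mem_setOf_eq, Set.mem_preimage]
      constructor
      · intro h; simpa using congrArg Subtype.val h
      · intro h; exact Subtype.ext (by simpa using h)
    rw [this]
    exact (finite_torsion _).preimage (Subtype.coe_injective.injOn)
  have hfin : {y : Fin d → DyadicPrufer | (2 ^ w b₀ : ℕ) • y = 0}.Finite := by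
    have : {y : Fin d → DyadicPrufer | (2 ^ w b₀ : ℕ) • y = 0}
        = Set.pi Set.univ (fun _ : Fin d => {x : DyadicPrufer | (2 ^ w b₀ : ℕ) • x = 0}) := by
      ext y
      simp only [Set.mem_setOf_eq, Set.mem_pi, Set.mem_univ, forall_true_left, funext_iff,
        Pi.smul_apply, Pi.zero_apply]
    rw [this]
    exact Set.Finite.pi (fun _ => hfin1)
  refine hfin.subset ?_
  intro b hb
  exact Set.mem_setOf_eq ▸ w_le_iff.mp (hconst b hb).le
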